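/- Let U ⊆ ℂⁿ = E₁ ⊕ E₂ be a k-dimensional subspace, π : ℂⁿ → ℂⁿ/U the quotient map, s = dim(U ∩ E₁), and t = dim(U ∩ E₂). Then there exists a linear map ψ : ℂⁿ/U → U with ψ(π(E₁)) ⊆ U ∩ E₂ and ψ(π(E₂)) ⊆ U ∩ E₁ such that rank(ψ) = min(s, (n−k) − dim π(E₁)) + min(t, (n−k) − dim π(E₂)), where dim π(E₁) = p − s and dim π(E₂) = q − t. (Thus a generic conormal vector to the orbit Q(s,t) at U attains this rank.) -/

import Mathlib

open Module

/-- There exists a linear map of rank `min (finrank V) (finrank W)`. -/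
lemma exists_rank_min_aux (V W : Type*) [AddCommGroup V] [Module ℂ V] [AddCommGroup W]
    [Module ℂ W] [FiniteDimensional ℂ V] [FiniteDimensional ℂ W] :
    ∃ f : V →ₗ[ℂ] W,
      finrank ℂ (LinearMap.range f) = min (finrank ℂ V) (finrank ℂ W) := by
  set a := finrank ℂ V with ha
  set b := finrank ℂ W with hb
  set m := min a b with hm
  let e₁ : V ≃ₗ[ℂ] (Fin a → ℂ) := (finBasis ℂ V).equivFun
  let e₂ : W ≃ₗ[ℂ] (Fin b → ℂ) := (finBasis ℂ W).equivFun
  let h₁ : (Fin a → ℂ) →ₗ[ℂ] (Fin m → ℂ) :=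
    LinearMap.funLeft ℂ ℂ (Fin.castLE (min_le_left a b))
  have h₁surj : Function.Surjective h₁ :=
    LinearMap.funLeft_surjective_of_injective ℂ ℂ _ (Fin.castLE_injective _)
  let h₂ : (Fin m → ℂ) →ₗ[ℂ] (Fin b → ℂ) :=
    Function.ExtendByZero.linearMap ℂ (Fin.castLE (min_le_right a b))
  have hcast : Function.Injective (Fin.castLE (min_le_right a b)) := Fin.castLE_injective _
  have h₂inj : Function.Injective h₂ := by
    intro f g hfg
    funext i
    have := congrFun hfg (Fin.castLE (min_le_right a b) i)
    simpa [h₂, hcast.extend_apply] using this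
  refine ⟨(e₂.symm.toLinearMap.comp (h₂.comp h₁)).comp e₁.toLinearMap, ?_⟩
  have hr1 : LinearMap.range ((e₂.symm.toLinearMap.comp (h₂.comp h₁)).comp e₁.toLinearMap)
      = LinearMap.range (e₂.symm.toLinearMap.comp h₂) := by
    have hmid : LinearMap.range (h₂.comp h₁) = LinearMap.range h₂ := by
      rw [LinearMap.range_comp, LinearMap.range_eq_top.2 h₁surj, Submodule.map_top]
    rw [LinearMap.range_comp e₁.toLinearMap, LinearEquiv.range, Submodule.map_top,
      LinearMap.range_comp, hmid, ← LinearMap.range_comp]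
  rw [hr1]
  have hinj : Function.Injective (e₂.symm.toLinearMap.comp h₂) :=
    e₂.symm.injective.comp h₂inj
  rw [LinearMap.finrank_range_of_inj hinj]
  simp [hm]

/-- There exists a linear map vanishing on `S` of rank
`min (finrank V - finrank S) (finrank W)`. -/
lemma exists_rank_min_vanishing (V W : Type*) [AddCommGroup V] [Module ℂ V] [AddCommGroup W]
    [Module ℂ W] [FiniteDimensional ℂ V] [FiniteDimensional ℂ W] (S : Submodule ℂ V) :
    ∃ g : V →ₗ[ℂ] W, (∀ x ∈ S, g x = 0) ∧
      finrank ℂ (LinearMap.range g) = min (finrank ℂ V - finrank ℂ S) (finrank ℂ W) := by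
  obtain ⟨C, hC⟩ := S.exists_isCompl
  have hdim : finrank ℂ S + finrank ℂ C = finrank ℂ V :=
    Submodule.finrank_add_eq_of_isCompl hC
  let proj : V →ₗ[ℂ] C := Submodule.linearProjOfIsCompl C S hC.symm
  have hproj0 : ∀ x ∈ S, proj x = 0 := fun x hx =>
    Submodule.projectionOnto_apply_of_mem_right hC.symm hx
  have hprojsurj : Function.Surjective proj := by
    rw [← LinearMap.range_eq_top]
    exact Submodule.linearProjOfIsCompl_range hC.symm
  obtain ⟨h, hh⟩ := exists_rank_min_aux (↥C) W
  refine ⟨h.comp proj, fun x hx => by simp [hproj0 x hx], ?_⟩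
  rw [LinearMap.range_comp, LinearMap.range_eq_top.2 hprojsurj, Submodule.map_top, hh]
  congr 1
  omega

theorem conormal_vector_rank_attained (p q k n s t : ℕ) (hp : 0 < p) (hq : 0 < q) (hk : 0 < k)
    (hpq : p + q = n) (hkn : k ≤ n)
    (E₁ E₂ : Submodule ℂ (Fin n → ℂ)) (hcompl : IsCompl E₁ E₂)
    (hE₁ : finrank ℂ E₁ = p) (hE₂ : finrank ℂ E₂ = q)
    (U : Submodule ℂ (Fin n → ℂ)) (hU : finrank ℂ U = k)
    (hs : finrank ℂ ↥(U ⊓ E₁) = s) (ht : finrank ℂ ↥(U ⊓ E₂) = t) :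
    ∃ ψ : ((Fin n → ℂ) ⧸ U) →ₗ[ℂ] U,
      (∀ x ∈ E₁, (ψ (U.mkQ x) : Fin n → ℂ) ∈ E₂) ∧
      (∀ x ∈ E₂, (ψ (U.mkQ x) : Fin n → ℂ) ∈ E₁) ∧
      finrank ℂ (LinearMap.range ψ) =
        min s ((n - k) - (p - s)) + min t ((n - k) - (q - t)) := by
  set Q := (Fin n → ℂ) ⧸ U with hQdef
  set P₁ := E₁.map U.mkQ with hP₁def
  set P₂ := E₂.map U.mkQ with hP₂def
  -- dimension of the quotient
  have hQdim : finrank ℂ Q + k = n := by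
    have := Submodule.finrank_quotient_add_finrank U
    rwa [hU, Module.finrank_fin_fun] at this
  -- dimension of P₁ and P₂
  have keydim : ∀ (E : Submodule ℂ (Fin n → ℂ)),
      finrank ℂ (E.map U.mkQ) + finrank ℂ ↥(U ⊓ E) = finrank ℂ E := by
    intro E
    let φ : E →ₗ[ℂ] Q := U.mkQ.comp E.subtype
    have hrange : LinearMap.range φ = E.map U.mkQ := by
      rw [LinearMap.range_comp, Submodule.range_subtype]
    have hker : LinearMap.ker φ = Submodule.comap E.subtype (U ⊓ E) := by
      ext x
      simp only [φ, LinearMap.mem_ker, LinearMap.comp_apply, Submodule.mkQ_apply,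
        Submodule.Quotient.mk_eq_zero, Submodule.mem_comap, Submodule.mem_inf,
        Submodule.coe_subtype]
      rw [Submodule.Quotient.mk_eq_zero]
      exact ⟨fun h => ⟨h, x.2⟩, fun h => h.1⟩
    have hkerdim : finrank ℂ (LinearMap.ker φ) = finrank ℂ ↥(U ⊓ E) := by
      rw [hker]
      exact (Submodule.comapSubtypeEquivOfLe inf_le_right).finrank_eq
    have := LinearMap.finrank_range_add_finrank_ker φ
    rw [hrange, hkerdim] at this
    exact this
  have hP₁dim : finrank ℂ P₁ + s = p := by rw [← hs, ← hE₁]; exact keydim E₁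
  have hP₂dim : finrank ℂ P₂ + t = q := by rw [← ht, ← hE₂]; exact keydim E₂
  -- P₁ ⊔ P₂ = ⊤
  have hsup : P₁ ⊔ P₂ = ⊤ := by
    rw [hP₁def, hP₂def, ← Submodule.map_sup, hcompl.sup_eq_top, Submodule.map_top,
      Submodule.range_mkQ]
  -- construct the two pieces
  obtain ⟨g₁, hg₁0, hg₁rank⟩ := exists_rank_min_vanishing Q ↥(U ⊓ E₂) P₂
  obtain ⟨g₂, hg₂0, hg₂rank⟩ := exists_rank_min_vanishing Q ↥(U ⊓ E₁) P₁
  let f₁ : Q →ₗ[ℂ] U := (Submodule.inclusion (inf_le_left : U ⊓ E₂ ≤ U)).comp g₁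
  let f₂ : Q →ₗ[ℂ] U := (Submodule.inclusion (inf_le_left : U ⊓ E₁ ≤ U)).comp g₂
  have hf₁0 : ∀ x ∈ P₂, f₁ x = 0 := fun x hx => by simp [f₁, hg₁0 x hx]
  have hf₂0 : ∀ x ∈ P₁, f₂ x = 0 := fun x hx => by simp [f₂, hg₂0 x hx]
  have hf₁E₂ : ∀ v : Q, ((f₁ v : U) : Fin n → ℂ) ∈ E₂ := fun v => ((g₁ v).2).2
  have hf₂E₁ : ∀ v : Q, ((f₂ v : U) : Fin n → ℂ) ∈ E₁ := fun v => ((g₂ v).2).2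
  refine ⟨f₁ + f₂, ?_, ?_, ?_⟩
  · intro x hx
    have h2 : f₂ (U.mkQ x) = 0 := hf₂0 _ (Submodule.mem_map_of_mem hx)
    simp only [LinearMap.add_apply, h2, add_zero]
    exact hf₁E₂ _
  · intro x hx
    have h1 : f₁ (U.mkQ x) = 0 := hf₁0 _ (Submodule.mem_map_of_mem hx)
    simp only [LinearMap.add_apply, h1, zero_add]
    exact hf₂E₁ _
  · -- compute the rank
    have hrange : LinearMap.range (f₁ + f₂) = LinearMap.range f₁ ⊔ LinearMap.range f₂ := by
      apply le_antisymm
      · rintro _ ⟨v, rfl⟩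
        exact Submodule.add_mem_sup (LinearMap.mem_range_self f₁ v)
          (LinearMap.mem_range_self f₂ v)
      · refine sup_le ?_ ?_
        · rintro _ ⟨v, rfl⟩
          obtain ⟨a, ha, b, hb, rfl⟩ := Submodule.mem_sup.1 (hsup ▸ Submodule.mem_top (x := v))
          refine ⟨a, ?_⟩
          simp only [LinearMap.add_apply, map_add, hf₁0 b hb, hf₂0 a ha, add_zero, zero_add]
        · rintro _ ⟨v, rfl⟩
          obtain ⟨a, ha, b, hb, rfl⟩ := Submodule.mem_sup.1 (hsup ▸ Submodule.mem_top (x := v))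
          refine ⟨b, ?_⟩
          simp only [LinearMap.add_apply, map_add, hf₁0 b hb, hf₂0 a ha, add_zero, zero_add]
    have hdisj : LinearMap.range f₁ ⊓ LinearMap.range f₂ = ⊥ := by
      rw [eq_bot_iff]
      rintro x ⟨hx1, hx2⟩
      obtain ⟨v, rfl⟩ := hx1
      obtain ⟨w, hw⟩ := hx2
      have hmem₂ : ((f₁ v : U) : Fin n → ℂ) ∈ E₂ := hf₁E₂ v
      have hmem₁ : ((f₁ v : U) : Fin n → ℂ) ∈ E₁ := hw ▸ hf₂E₁ w
      have : ((f₁ v : U) : Fin n → ℂ) ∈ E₁ ⊓ E₂ := ⟨hmem₁, hmem₂⟩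
      rw [hcompl.inf_eq_bot] at this
      have : ((f₁ v : U) : Fin n → ℂ) = 0 := this
      simp only [Submodule.mem_bot]
      exact Subtype.ext this
    have hranks : finrank ℂ (LinearMap.range (f₁ + f₂)) =
        finrank ℂ (LinearMap.range f₁) + finrank ℂ (LinearMap.range f₂) := by
      rw [hrange]
      have := Submodule.finrank_sup_add_finrank_inf_eq (LinearMap.range f₁) (LinearMap.range f₂)
      rw [hdisj] at this
      simpa using this
    have hrankf₁ : finrank ℂ (LinearMap.range f₁) = finrank ℂ (LinearMap.range g₁) := by
      rw [LinearMap.range_comp]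
      exact ((LinearMap.range g₁).equivMapOfInjective _
        (Submodule.inclusion_injective _)).symm.finrank_eq
    have hrankf₂ : finrank ℂ (LinearMap.range f₂) = finrank ℂ (LinearMap.range g₂) := by
      rw [LinearMap.range_comp]
      exact ((LinearMap.range g₂).equivMapOfInjective _
        (Submodule.inclusion_injective _)).symm.finrank_eq
    have e1 : finrank ℂ Q - finrank ℂ P₂ = (n - k) - (q - t) := by omega
    have e2 : finrank ℂ Q - finrank ℂ P₁ = (n - k) - (p - s) := by omega
    rw [hranks, hrankf₁, hrankf₂, hg₁rank, hg₂rank, ht, hs, e1, e2]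
    omega
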